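/- Let M ∈ ℂ^{n×n} be an idempotent matrix of rank r with singular value decomposition M = UΣV^H, and let u_j and v_j denote the left and right singular vectors (columns of U and V) associated with the nonzero singular values σ_j, j = 1, …, r. Then u_j^H v_j = σ_j^{−1} for each j = 1, …, r; more precisely, with U_r, V_r ∈ ℂ^{n×r} the first r columns of U and V and Ω = diag(σ₁, …, σ_r), one has V_r^H U_r = Ω^{−1}. -/
import Mathlib


open Matrix

/-- For an idempotent matrix `M` of rank `r` with SVD `M = U Σ Vᴴ`,
the left and right singular vectors `u_j`, `v_j` associated with the nonzero
singular values satisfy `u_jᴴ v_j = σ_j⁻¹`; more precisely `Vrᴴ Ur = Ω⁻¹`. -/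
theorem svd_idempotent_inner_products {n r : ℕ} (hr : r ≤ n)
    (M U V : Matrix (Fin n) (Fin n) ℂ) (σ : Fin n → ℝ)
    (hM : M * M = M) (hrank : M.rank = r)
    (hU : U ∈ Matrix.unitaryGroup (Fin n) ℂ)
    (hV : V ∈ Matrix.unitaryGroup (Fin n) ℂ)
    (hdec : ∀ i j : Fin n, i ≤ j → σ j ≤ σ i)
    (hpos : ∀ i : Fin n, (i : ℕ) < r → 0 < σ i)
    (hzero : ∀ i : Fin n, r ≤ (i : ℕ) → σ i = 0)
    (hsvd : M = U * Matrix.diagonal (fun i => (σ i : ℂ)) * Vᴴ) :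
    (∀ j : Fin r,
        (∑ i : Fin n, (starRingEnd ℂ) (U i (Fin.castLE hr j)) * V i (Fin.castLE hr j)) =
          ((σ (Fin.castLE hr j) : ℂ))⁻¹) ∧
      (V.submatrix id (Fin.castLE hr))ᴴ * U.submatrix id (Fin.castLE hr) =
        (Matrix.diagonal (fun j : Fin r => (σ (Fin.castLE hr j) : ℂ)))⁻¹ := by
  set D : Matrix (Fin n) (Fin n) ℂ := Matrix.diagonal (fun i => (σ i : ℂ)) with hD
  have hUu : Uᴴ * U = 1 := Matrix.mem_unitaryGroup_iff'.mp hU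
  have hVv : Vᴴ * V = 1 := Matrix.mem_unitaryGroup_iff'.mp hV
  have h1 : U * D * Vᴴ * (U * D * Vᴴ) = U * D * Vᴴ := by rw [← hsvd]; exact hM
  have key : D * (Vᴴ * U) * D = D := by
    have h2 := congrArg (fun X => Uᴴ * X * V) h1
    simp only [Matrix.mul_assoc] at h2 ⊢
    rw [hVv, Matrix.mul_one] at h2
    rw [← Matrix.mul_assoc Uᴴ U, hUu, Matrix.one_mul] at h2
    rw [← Matrix.mul_assoc Uᴴ U, hUu, Matrix.one_mul] at h2
    exact h2
  have hA : ∀ j k : Fin r, (Vᴴ * U) (Fin.castLE hr j) (Fin.castLE hr k) =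
      if j = k then ((σ (Fin.castLE hr j) : ℂ))⁻¹ else 0 := by
    intro j k
    have hjpos : (σ (Fin.castLE hr j) : ℂ) ≠ 0 := by
      exact_mod_cast (hpos _ (by simp [j.isLt])).ne'
    have hkpos : (σ (Fin.castLE hr k) : ℂ) ≠ 0 := by
      exact_mod_cast (hpos _ (by simp [k.isLt])).ne'
    have he := congrFun (congrFun key (Fin.castLE hr j)) (Fin.castLE hr k)
    rw [hD, Matrix.mul_diagonal, Matrix.diagonal_mul, Matrix.diagonal_apply] at he
    by_cases hjk : j = k
    · subst hjk
      rw [if_pos rfl] at he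
      rw [if_pos rfl]
      field_simp at he ⊢
      linear_combination he
    · have hne : Fin.castLE hr j ≠ Fin.castLE hr k := fun h => hjk (Fin.ext (by
        simpa [Fin.ext_iff] using h))
      rw [if_neg hne] at he
      rw [if_neg hjk]
      rcases mul_eq_zero.mp he with h | h
      · exact (mul_eq_zero.mp h).resolve_left hjpos
      · exact absurd h hkpos
  constructor
  · intro j
    have hAj := hA j j
    rw [if_pos rfl] at hAj
    have h3 : (∑ i : Fin n, (starRingEnd ℂ) (U i (Fin.castLE hr j)) * V i (Fin.castLE hr j))
        = (starRingEnd ℂ) ((Vᴴ * U) (Fin.castLE hr j) (Fin.castLE hr j)) := by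
      simp [Matrix.mul_apply, Matrix.conjTranspose_apply, map_sum, mul_comm]
    rw [h3, hAj, ← Complex.ofReal_inv, Complex.conj_ofReal, Complex.ofReal_inv]
  · have hdiag : (Matrix.diagonal (fun j : Fin r => (σ (Fin.castLE hr j) : ℂ)))⁻¹
        = Matrix.diagonal (fun j : Fin r => ((σ (Fin.castLE hr j) : ℂ))⁻¹) := by
      apply Matrix.inv_eq_right_inv
      rw [Matrix.diagonal_mul_diagonal]
      have hfun : (fun i : Fin r => (σ (Fin.castLE hr i) : ℂ) * ((σ (Fin.castLE hr i) : ℂ))⁻¹)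
          = fun _ => 1 := funext fun j =>
        mul_inv_cancel₀ (by exact_mod_cast (hpos (Fin.castLE hr j) (by simp)).ne')
      rw [hfun, Matrix.diagonal_one]
    rw [hdiag]
    ext j k
    have hLHS : ((V.submatrix id (Fin.castLE hr))ᴴ * U.submatrix id (Fin.castLE hr)) j k
        = (Vᴴ * U) (Fin.castLE hr j) (Fin.castLE hr k) := by
      simp [Matrix.mul_apply, Matrix.conjTranspose_apply, Matrix.submatrix_apply]
    rw [hLHS, hA j k, Matrix.diagonal_apply]
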